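/- Right translations are graded derivations of the Gerstenhaber bracket: defining R_f g := [g, f], one has, for all multilinear maps f ∈ C^m, g ∈ C^n, h ∈ C^p, R_f [g,h] = (−1)^{|f||h|} [R_f g, h] + [g, R_f h], where |f| = m−1, |g| = n−1, |h| = p−1. -/
import Mathlib


open Finset

section OperadPrelude

variable {K : Type*} [CommRing K] {L : Type*} [AddCommGroup L] [Module K L]

/-- `C K L n`: the `K`-module of `n`-multilinear maps `L^n → L`
(the degree-`n` component of the endomorphism operad of `L`). -/
abbrev C (K L : Type*) [CommRing K] [AddCommGroup L] [Module K L] (n : ℕ) :=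
  MultilinearMap K (fun _ : Fin n => L) L

/-- The extension of an `n`-ary multilinear operation to sequences `ℕ → L`:
it evaluates `f` on the first `n` entries of the sequence.  Two `n`-ary
multilinear operations are equal iff their extensions are equal, so operadic
identities are stated as identities between extensions. -/
def ex {n : ℕ} (f : C K L n) : (ℕ → L) → L := fun x => f fun j => x j.1

/-- The sign `(-1)^e` for an integer exponent `e`. -/
def sgn (e : ℤ) : ℤ := (((-1 : ℤˣ) ^ e : ℤˣ) : ℤ)

/-- Partial composition `f ∘ᵢ g`, where `n = deg g`:
`(f ∘ᵢ g)(x₀, x₁, …) = (-1)^{i(n-1)} f(x₀,…,x_{i-1}, g(x_i,…,x_{i+n-1}), x_{i+n},…)`. -/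
def pc (n i : ℕ) (f g : (ℕ → L) → L) : (ℕ → L) → L :=
  fun x => sgn ((i : ℤ) * ((n : ℤ) - 1)) •
    f fun j => if j < i then x j else if j = i then g (fun k => x (i + k)) else x (j + n - 1)

/-- Total composition `f ∘ g := Σ_{i=0}^{m-1} f ∘ᵢ g`, where `m = deg f`, `n = deg g`. -/
def tc (m n : ℕ) (f g : (ℕ → L) → L) : (ℕ → L) → L :=
  fun x => ∑ i ∈ Finset.range m, pc n i f g x

/-- The associator `(h, f, g) := (h ∘ f) ∘ g − h ∘ (f ∘ g)` of the total composition,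
where `m = deg h`, `n = deg f`, `p = deg g`. -/
def assoc (m n p : ℕ) (h f g : (ℕ → L) → L) : (ℕ → L) → L :=
  fun x => tc (m + n - 1) p (tc m n h f) g x - tc m (n + p - 1) h (tc n p f g) x

/-- The brace `⟨h|fg⟩ := Σ (h ∘ᵢ f) ∘ⱼ g`, summed over `0 ≤ i ≤ m-2`,
`i + n ≤ j ≤ m + n - 2`, where `m = deg h`, `n = deg f`, `p = deg g`. -/
def br2 (m n p : ℕ) (h f g : (ℕ → L) → L) : (ℕ → L) → L :=
  fun x => ∑ i ∈ Finset.range (m - 1), ∑ j ∈ Finset.Icc (i + n) (m + n - 2),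
    pc p j (pc n i h f) g x

/-- The triple brace `⟨h|fgb⟩ := Σ ((h ∘ᵢ f) ∘ⱼ g) ∘ₖ b`, summed over `0 ≤ i ≤ m-3`,
`i + n ≤ j ≤ m + n - 3`, `j + p ≤ k ≤ m + n + p - 3`, where
`m = deg h`, `n = deg f`, `p = deg g`, `q = deg b`. -/
def br3 (m n p q : ℕ) (h f g b : (ℕ → L) → L) : (ℕ → L) → L :=
  fun x => ∑ i ∈ Finset.range (m - 2), ∑ j ∈ Finset.Icc (i + n) (m + n - 3),
    ∑ k ∈ Finset.Icc (j + p) (m + n + p - 3),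
      pc q k (pc p j (pc n i h f) g) b x

/-- The Gerstenhaber bracket `[f,g] := f ∘ g − (-1)^{|f||g|} g ∘ f`,
where `m = deg f`, `n = deg g`, `|f| = m - 1`, `|g| = n - 1`. -/
def gb (m n : ℕ) (f g : (ℕ → L) → L) : (ℕ → L) → L :=
  fun x => tc m n f g x - sgn (((m : ℤ) - 1) * ((n : ℤ) - 1)) • tc n m g f x

/-- The cup product `f ⌣ g := (-1)^{deg f} (μ ∘₀ f) ∘_{deg f} g`,
where `m = deg f`, `n = deg g`. -/
def cup (μ : C K L 2) (m n : ℕ) (f g : (ℕ → L) → L) : (ℕ → L) → L :=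
  fun x => sgn (m : ℤ) • pc n m (pc m 0 (ex μ) f) g x

/-- The coboundary operator `δ_μ f := −[f, μ]`, where `m = deg f`. -/
def delta (μ : C K L 2) (m : ℕ) (f : (ℕ → L) → L) : (ℕ → L) → L :=
  fun x => - gb m 2 f (ex μ) x


-- ====== sign lemmas ======

lemma sgn_add (a b : ℤ) : sgn (a + b) = sgn a * sgn b := by
  simp [sgn, zpow_add]

lemma sgn_eq_one_or (a : ℤ) : sgn a = 1 ∨ sgn a = -1 := by
  rcases Int.units_eq_one_or ((-1 : ℤˣ) ^ a) with h | h <;> simp [sgn, h]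

lemma sgn_mul_self (a : ℤ) : sgn a * sgn a = 1 := by
  rcases sgn_eq_one_or a with h | h <;> rw [h] <;> norm_num

lemma sgn_smul_sgn (a b : ℤ) (v : L) : sgn a • sgn b • v = sgn (a + b) • v := by
  rw [smul_smul, ← sgn_add, add_comm]

-- ====== pc as linear map in the g-value ======

lemma pc_ex {a : ℕ} (F : C K L a) (n i : ℕ) (hi : i < a) (G : (ℕ → L) → L) (x : ℕ → L) :
    pc n i (ex F) G x = sgn ((i : ℤ) * ((n : ℤ) - 1)) •
      F.toLinearMap (fun j : Fin a => if j.1 < i then x j.1 else x (j.1 + n - 1)) ⟨i, hi⟩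
        (G fun k => x (i + k)) := by
  rw [pc, MultilinearMap.toLinearMap_apply]
  simp only [ex]
  apply congrArg
  apply congrArg
  funext t
  by_cases h1 : (t : ℕ) < i
  · rw [Function.update_apply]
    have : t ≠ (⟨i, hi⟩ : Fin a) := by
      intro h; rw [h] at h1; exact lt_irrefl _ h1
    simp [this, h1]
  · by_cases h2 : (t : ℕ) = i
    · have : t = (⟨i, hi⟩ : Fin a) := Fin.ext h2
      rw [this, Function.update_self]
      simp
    · rw [Function.update_apply]
      have : t ≠ (⟨i, hi⟩ : Fin a) := by
        intro h; apply h2; rw [h]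
      simp [this, h1, h2]


-- ====== structured application lemmas ======

/-- The reindexed argument sequence of a partial composition. -/
def pcArg (n i : ℕ) (g : (ℕ → L) → L) (x : ℕ → L) : ℕ → L :=
  fun j => if j < i then x j else if j = i then g (fun k => x (i + k)) else x (j + n - 1)

lemma pc_apply (n i : ℕ) (f g : (ℕ → L) → L) (x : ℕ → L) :
    pc n i f g x = sgn ((i : ℤ) * ((n : ℤ) - 1)) • f (pcArg n i g x) := rfl

lemma smul_congr_sgn {e1 e2 : ℤ} {v w : L} (he : e1 = e2) (hv : v = w) :
    sgn e1 • v = sgn e2 • w := by rw [he, hv]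

/-- `ex F` applied to a `pcArg` sequence, seen through the linear map in coordinate `i`. -/
lemma ex_pcArg {a : ℕ} (F : C K L a) (n i : ℕ) (hi : i < a) (G : (ℕ → L) → L) (x : ℕ → L) :
    ex F (pcArg n i G x) = F.toLinearMap
      (fun j : Fin a => if j.1 < i then x j.1 else x (j.1 + n - 1)) ⟨i, hi⟩
      (G fun k => x (i + k)) := by
  have := pc_ex F n i hi G x
  rw [pc_apply] at this
  rcases sgn_eq_one_or ((i : ℤ) * ((n : ℤ) - 1)) with h | h <;> rw [h] at this <;>
    [simpa using this; (rw [neg_smul, neg_smul, neg_inj] at this; simpa using this)]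


-- ====== dependence on initial segment ======

/-- `Dep n F`: `F` only depends on the first `n` entries of the sequence. -/
def Dep (n : ℕ) (F : (ℕ → L) → L) : Prop :=
  ∀ u v : ℕ → L, (∀ k, k < n → u k = v k) → F u = F v

lemma dep_ex {n : ℕ} (f : C K L n) : Dep n (ex f) := by
  intro u v huv
  simp only [ex]
  apply congrArg
  funext j
  exact huv j.1 j.2

-- ====== the two composition relations ======

/-- Disjoint composition relation: plugging `h` strictly to the right of `g`. -/
lemma pc_pc_right {b p' : ℕ} (f g h : (ℕ → L) → L) (hg : Dep b g)
    {i j : ℕ} (hij : i + b ≤ j) (x : ℕ → L) :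
    pc p' j (pc b i f g) h x
      = sgn (((b : ℤ) - 1) * ((p' : ℤ) - 1)) • pc b i (pc p' (j - b + 1) f h) g x := by
  simp only [pc_apply, smul_smul]
  rw [← sgn_add, ← sgn_add, ← sgn_add]
  apply smul_congr_sgn
  · have hc : ((j - b + 1 : ℕ) : ℤ) = (j : ℤ) - (b : ℤ) + 1 := by omega
    rw [hc]; ring
  · apply congrArg
    funext a
    simp only [pcArg]
    split_ifs <;>
      first
        | rfl
        | omega
        | (exfalso; omega)
        | (congr 1; omega)
        | (exact hg _ _ fun k hk => by rw [if_pos (by omega)])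
        | (exact (hg _ _ fun k hk => by rw [if_pos (by omega)]).symm)
        | (apply congrArg; funext k;
            rw [if_neg (by omega), if_neg (by omega)]; congr 1; omega)
        | (symm; apply congrArg; funext k;
            rw [if_neg (by omega), if_neg (by omega)]; congr 1; omega)


/-- Nested composition relation: plugging `h` inside `g`. -/
lemma pc_pc_mid {a : ℕ} (F : C K L a) {b p' : ℕ} (g h : (ℕ → L) → L)
    {i t : ℕ} (hi : i < a) (ht : t < b) (x : ℕ → L) :
    pc p' (i + t) (pc b i (ex F) g) h x = pc (b + p' - 1) i (ex F) (pc p' t g h) x := by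
  simp only [pc_apply]
  rw [ex_pcArg F b i hi, ex_pcArg F (b + p' - 1) i hi, pc_apply, map_zsmul]
  simp only [smul_smul]
  rw [← sgn_add, ← sgn_add]
  apply smul_congr_sgn
  · have hc : ((b + p' - 1 : ℕ) : ℤ) = (b : ℤ) + (p' : ℤ) - 1 := by omega
    rw [hc]; push_cast; ring
  · simp only [MultilinearMap.toLinearMap_apply]
    apply congrArg
    funext j
    rw [Function.update_apply, Function.update_apply]
    by_cases hj : j = (⟨i, hi⟩ : Fin a)
    · rw [if_pos hj, if_pos hj]
      apply congrArg
      funext k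
      simp only [pcArg]
      split_ifs <;>
        first
          | rfl
          | (exfalso; omega)
          | (congr 1; omega)
          | (apply congrArg; funext r; congr 1; omega)
    · rw [if_neg hj, if_neg hj]
      have hj1 : (j : ℕ) ≠ i := fun hh => hj (Fin.ext hh)
      simp only [pcArg]
      split_ifs <;>
        first
          | rfl
          | (exfalso; omega)
          | (congr 1; omega)


-- ====== composition with total compositions ======

lemma pc_left_tc (n i a' b' : ℕ) (f g h : (ℕ → L) → L) (x : ℕ → L) :
    pc n i (tc a' b' f g) h x = ∑ t ∈ Finset.range a', pc n i (pc b' t f g) h x := by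
  simp only [pc_apply, tc, smul_sum]

lemma pc_right_tc {a : ℕ} (F : C K L a) (n i : ℕ) (hi : i < a) (b' c' : ℕ)
    (g h : (ℕ → L) → L) (x : ℕ → L) :
    pc n i (ex F) (tc b' c' g h) x = ∑ t ∈ Finset.range b', pc n i (ex F) (pc c' t g h) x := by
  rw [pc_apply, ex_pcArg F n i hi]
  have : (tc b' c' g h fun k => x (i + k)) = ∑ t ∈ Finset.range b', pc c' t g h (fun k => x (i + k)) := rfl
  rw [this, map_sum, smul_sum]
  exact Finset.sum_congr rfl fun t _ => by
    rw [pc_apply n i (ex F) (pc c' t g h) x, ex_pcArg F n i hi, pc_apply]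

-- ====== associator decomposition ======

lemma assoc_decomp {a b c : ℕ} (F : C K L a) (G : C K L b) (H : C K L c) (x : ℕ → L) :
    assoc a b c (ex F) (ex G) (ex H) x
      = (∑ q ∈ (Finset.range a ×ˢ Finset.range (a + b - 1)).filter (fun q => q.2 < q.1),
          pc c q.2 (pc b q.1 (ex F) (ex G)) (ex H) x)
      + ∑ q ∈ (Finset.range a ×ˢ Finset.range (a + b - 1)).filter (fun q => q.1 + b ≤ q.2),
          pc c q.2 (pc b q.1 (ex F) (ex G)) (ex H) x := by
  have h1 : tc (a + b - 1) c (tc a b (ex F) (ex G)) (ex H) x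
      = ∑ q ∈ Finset.range a ×ˢ Finset.range (a + b - 1),
          pc c q.2 (pc b q.1 (ex F) (ex G)) (ex H) x := by
    rw [Finset.sum_product]
    calc tc (a + b - 1) c (tc a b (ex F) (ex G)) (ex H) x
        = ∑ j ∈ Finset.range (a + b - 1), pc c j (tc a b (ex F) (ex G)) (ex H) x := rfl
      _ = ∑ j ∈ Finset.range (a + b - 1), ∑ i ∈ Finset.range a,
            pc c j (pc b i (ex F) (ex G)) (ex H) x :=
          Finset.sum_congr rfl fun j _ => pc_left_tc c j a b (ex F) (ex G) (ex H) x
      _ = _ := Finset.sum_comm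
  have h2 : tc a (b + c - 1) (ex F) (tc b c (ex G) (ex H)) x
      = ∑ q ∈ (Finset.range a ×ˢ Finset.range (a + b - 1)).filter
            (fun q => ¬ q.2 < q.1 ∧ ¬ (q.1 + b ≤ q.2)),
          pc c q.2 (pc b q.1 (ex F) (ex G)) (ex H) x := by
    calc tc a (b + c - 1) (ex F) (tc b c (ex G) (ex H)) x
        = ∑ i ∈ Finset.range a, ∑ t ∈ Finset.range b,
            pc (b + c - 1) i (ex F) (pc c t (ex G) (ex H)) x :=
          Finset.sum_congr rfl fun i hi =>
            pc_right_tc F (b + c - 1) i (Finset.mem_range.mp hi) b c (ex G) (ex H) x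
      _ = ∑ q ∈ Finset.range a ×ˢ Finset.range b,
            pc (b + c - 1) q.1 (ex F) (pc c q.2 (ex G) (ex H)) x :=
          (Finset.sum_product' _ _ _).symm
      _ = _ := by
          apply Finset.sum_nbij' (i := fun q : ℕ × ℕ => (q.1, q.1 + q.2))
            (j := fun q : ℕ × ℕ => (q.1, q.2 - q.1))
          · rintro ⟨u, v⟩ hq
            simp only [Finset.mem_product, Finset.mem_range, Finset.mem_filter] at hq ⊢
            omega
          · rintro ⟨u, v⟩ hq
            simp only [Finset.mem_product, Finset.mem_range, Finset.mem_filter] at hq ⊢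
            omega
          · rintro ⟨u, v⟩ hq
            simp only [Finset.mem_product, Finset.mem_range] at hq
            have huv : u + v - u = v := by omega
            simp [huv]
          · rintro ⟨u, v⟩ hq
            simp only [Finset.mem_product, Finset.mem_range, Finset.mem_filter] at hq
            have huv : u + (v - u) = v := by omega
            simp [huv]
          · rintro ⟨u, v⟩ hq
            simp only [Finset.mem_product, Finset.mem_range] at hq
            exact (pc_pc_mid F (ex G) (ex H) hq.1 hq.2 x).symm
  have hsplit := Finset.sum_filter_add_sum_filter_not
    (Finset.range a ×ˢ Finset.range (a + b - 1)) (fun q => q.2 < q.1)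
    (fun q => pc c q.2 (pc b q.1 (ex F) (ex G)) (ex H) x)
  have hsplit2 := Finset.sum_filter_add_sum_filter_not
    ((Finset.range a ×ˢ Finset.range (a + b - 1)).filter (fun q => ¬ q.2 < q.1))
    (fun q => q.1 + b ≤ q.2)
    (fun q => pc c q.2 (pc b q.1 (ex F) (ex G)) (ex H) x)
  rw [Finset.filter_filter, Finset.filter_filter] at hsplit2
  have e1 : ((Finset.range a ×ˢ Finset.range (a + b - 1)).filter
        (fun q => ¬ q.2 < q.1 ∧ q.1 + b ≤ q.2))
      = (Finset.range a ×ˢ Finset.range (a + b - 1)).filter (fun q => q.1 + b ≤ q.2) := by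
    apply Finset.filter_congr
    intro q _
    constructor
    · exact fun hh => hh.2
    · intro hh; exact ⟨by omega, hh⟩
  rw [e1] at hsplit2
  rw [assoc, h1, h2, ← hsplit, ← hsplit2]
  abel


-- ====== flipping the outer brace region ======

lemma brace_flip {a b c : ℕ} (F : C K L a) (G : C K L b) (H : C K L c) (x : ℕ → L) :
    ∑ q ∈ (Finset.range a ×ˢ Finset.range (a + b - 1)).filter (fun q => q.1 + b ≤ q.2),
        pc c q.2 (pc b q.1 (ex F) (ex G)) (ex H) x
    = sgn (((b : ℤ) - 1) * ((c : ℤ) - 1)) •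
      ∑ q ∈ (Finset.range a ×ˢ Finset.range (a + c - 1)).filter (fun q => q.2 < q.1),
        pc b q.2 (pc c q.1 (ex F) (ex H)) (ex G) x := by
  rw [smul_sum]
  apply Finset.sum_nbij' (i := fun q : ℕ × ℕ => (q.2 - b + 1, q.1))
    (j := fun q : ℕ × ℕ => (q.2, q.1 + b - 1))
  · rintro ⟨u, v⟩ hq
    simp only [Finset.mem_product, Finset.mem_range, Finset.mem_filter] at hq ⊢
    omega
  · rintro ⟨u, v⟩ hq
    simp only [Finset.mem_product, Finset.mem_range, Finset.mem_filter] at hq ⊢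
    omega
  · rintro ⟨u, v⟩ hq
    simp only [Finset.mem_product, Finset.mem_range, Finset.mem_filter] at hq
    have h1 : (u : ℕ) = u := rfl
    have h2 : v - b + 1 + b - 1 = v := by omega
    simp [h2]
  · rintro ⟨u, v⟩ hq
    simp only [Finset.mem_product, Finset.mem_range, Finset.mem_filter] at hq
    have h2 : u + b - 1 - b + 1 = u := by omega
    simp [h2]
  · rintro ⟨u, v⟩ hq
    simp only [Finset.mem_product, Finset.mem_range, Finset.mem_filter] at hq
    exact pc_pc_right (ex F) (ex G) (ex H) (dep_ex G) hq.2 x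

-- ====== graded symmetry of the associator ======

lemma assoc_symm {a b c : ℕ} (F : C K L a) (G : C K L b) (H : C K L c) (x : ℕ → L) :
    assoc a b c (ex F) (ex G) (ex H) x
      = sgn (((b : ℤ) - 1) * ((c : ℤ) - 1)) • assoc a c b (ex F) (ex H) (ex G) x := by
  have e1 := brace_flip F G H x
  have e2 := brace_flip F H G x
  have hsgn : sgn (((c : ℤ) - 1) * ((b : ℤ) - 1)) = sgn (((b : ℤ) - 1) * ((c : ℤ) - 1)) := by
    rw [mul_comm]
  rw [hsgn] at e2
  rw [assoc_decomp F G H, assoc_decomp F H G, e1, smul_add, e2, smul_smul, sgn_mul_self,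
    one_smul]
  abel


-- ====== pointwise expansions of the bracket ======

lemma gb_apply (a b : ℕ) (f g : (ℕ → L) → L) (x : ℕ → L) :
    gb a b f g x = tc a b f g x - sgn (((a : ℤ) - 1) * ((b : ℤ) - 1)) • tc b a g f x := rfl

lemma pc_gb_left (m' i n' p' : ℕ) (P Q F : (ℕ → L) → L) (x : ℕ → L) :
    pc m' i (gb n' p' P Q) F x
      = pc m' i (tc n' p' P Q) F x
        - sgn (((n' : ℤ) - 1) * ((p' : ℤ) - 1)) • pc m' i (tc p' n' Q P) F x := by
  simp only [pc_apply, gb]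
  rw [smul_sub, smul_comm]

lemma tc_gb_left (a m' n' p' : ℕ) (P Q F : (ℕ → L) → L) (x : ℕ → L) :
    tc a m' (gb n' p' P Q) F x
      = tc a m' (tc n' p' P Q) F x
        - sgn (((n' : ℤ) - 1) * ((p' : ℤ) - 1)) • tc a m' (tc p' n' Q P) F x := by
  simp only [tc, smul_sum, ← Finset.sum_sub_distrib]
  exact Finset.sum_congr rfl fun i _ => pc_gb_left m' i n' p' P Q F x

lemma pc_gb_right {a : ℕ} (F : C K L a) (m' i : ℕ) (hi : i < a) (n' p' : ℕ)
    (P Q : (ℕ → L) → L) (x : ℕ → L) :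
    pc m' i (ex F) (gb n' p' P Q) x
      = pc m' i (ex F) (tc n' p' P Q) x
        - sgn (((n' : ℤ) - 1) * ((p' : ℤ) - 1)) • pc m' i (ex F) (tc p' n' Q P) x := by
  rw [pc_apply m' i (ex F) (gb n' p' P Q) x, ex_pcArg F m' i hi,
    pc_apply m' i (ex F) (tc n' p' P Q) x, ex_pcArg F m' i hi,
    pc_apply m' i (ex F) (tc p' n' Q P) x, ex_pcArg F m' i hi]
  have : (gb n' p' P Q fun k => x (i + k))
      = (tc n' p' P Q fun k => x (i + k))
        - sgn (((n' : ℤ) - 1) * ((p' : ℤ) - 1)) • (tc p' n' Q P fun k => x (i + k)) := rfl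
  rw [this, map_sub, map_zsmul, smul_sub, smul_comm]

lemma tc_gb_right {a : ℕ} (F : C K L a) (m' n' p' : ℕ) (P Q : (ℕ → L) → L) (x : ℕ → L) :
    tc a m' (ex F) (gb n' p' P Q) x
      = tc a m' (ex F) (tc n' p' P Q) x
        - sgn (((n' : ℤ) - 1) * ((p' : ℤ) - 1)) • tc a m' (ex F) (tc p' n' Q P) x := by
  simp only [tc, smul_sum, ← Finset.sum_sub_distrib]
  exact Finset.sum_congr rfl fun i hi =>
    pc_gb_right F m' i (Finset.mem_range.mp hi) n' p' P Q x

-- ====== zero lemmas ======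

lemma tc_zero_left (b : ℕ) (f g : (ℕ → L) → L) (x : ℕ → L) : tc 0 b f g x = 0 := by
  simp [tc]

lemma tc_left_zeroF (a b : ℕ) (f g : (ℕ → L) → L) (hf : ∀ y, f y = 0) (x : ℕ → L) :
    tc a b f g x = 0 := by
  simp only [tc, pc_apply, hf, smul_zero, Finset.sum_const_zero]

lemma tc_right_zeroF {a : ℕ} (F : C K L a) (b : ℕ) (Z : (ℕ → L) → L)
    (hZ : ∀ y, Z y = 0) (x : ℕ → L) : tc a b (ex F) Z x = 0 := by
  apply Finset.sum_eq_zero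
  intro i hi
  rw [pc_apply, ex_pcArg F b i (Finset.mem_range.mp hi), hZ, map_zero, smul_zero]

lemma gb00_zero (G H : (ℕ → L) → L) (y : ℕ → L) : gb 0 0 G H y = 0 := by
  simp [gb, tc]

-- more sign lemmas
lemma sgn_two_mul (a : ℤ) : sgn (2 * a) = 1 := by
  have : 2 * a = a + a := by ring
  rw [this, sgn_add, sgn_mul_self]

lemma sgn_one : sgn 1 = -1 := by simp [sgn]


-- ====== the generic case of the main theorem ======

lemma main_generic {m n p : ℕ} (f : C K L m) (g : C K L n) (h : C K L p)
    (hnp : 1 ≤ n + p) (hnm : 1 ≤ n + m) (hpm : 1 ≤ p + m) (x : ℕ → L) :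
    gb (n + p - 1) m (gb n p (ex g) (ex h)) (ex f) x
      = sgn (((m : ℤ) - 1) * ((p : ℤ) - 1)) •
            gb (n + m - 1) p (gb n m (ex g) (ex f)) (ex h) x
          + gb n (p + m - 1) (ex g) (gb p m (ex h) (ex f)) x := by
  rw [gb_apply (n+p-1) m _ _ x, gb_apply (n+m-1) p _ _ x, gb_apply n (p+m-1) _ _ x]
  rw [tc_gb_left (n+p-1) m n p (ex g) (ex h) (ex f) x]
  rw [tc_gb_right f (n+p-1) n p (ex g) (ex h) x]
  rw [tc_gb_left (n+m-1) p n m (ex g) (ex f) (ex h) x]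
  rw [tc_gb_right h (n+m-1) n m (ex g) (ex f) x]
  rw [tc_gb_right g (p+m-1) p m (ex h) (ex f) x]
  rw [tc_gb_left (p+m-1) n p m (ex h) (ex f) (ex g) x]
  -- associator substitutions
  have hA1 : tc (n+p-1) m (tc n p (ex g) (ex h)) (ex f) x
      = tc n (p+m-1) (ex g) (tc p m (ex h) (ex f)) x
        + sgn (((p:ℤ)-1) * ((m:ℤ)-1)) • assoc n m p (ex g) (ex f) (ex h) x := by
    rw [← assoc_symm g h f x]
    have hd : assoc n p m (ex g) (ex h) (ex f) x
        = tc (n+p-1) m (tc n p (ex g) (ex h)) (ex f) x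
          - tc n (p+m-1) (ex g) (tc p m (ex h) (ex f)) x := rfl
    rw [hd]; abel
  have hA2 : tc (n+p-1) m (tc p n (ex h) (ex g)) (ex f) x
      = tc p (n+m-1) (ex h) (tc n m (ex g) (ex f)) x
        + sgn (((n:ℤ)-1) * ((m:ℤ)-1)) • assoc p m n (ex h) (ex f) (ex g) x := by
    rw [show (n+p-1 : ℕ) = p+n-1 from by omega, ← assoc_symm h g f x]
    have hd : assoc p n m (ex h) (ex g) (ex f) x
        = tc (p+n-1) m (tc p n (ex h) (ex g)) (ex f) x
          - tc p (n+m-1) (ex h) (tc n m (ex g) (ex f)) x := rfl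
    rw [hd]; abel
  have hA6 : tc (n+m-1) p (tc m n (ex f) (ex g)) (ex h) x
      = tc m (n+p-1) (ex f) (tc n p (ex g) (ex h)) x
        + sgn (((n:ℤ)-1) * ((p:ℤ)-1)) • assoc m p n (ex f) (ex h) (ex g) x := by
    rw [show (n+m-1 : ℕ) = m+n-1 from by omega, ← assoc_symm f g h x]
    have hd : assoc m n p (ex f) (ex g) (ex h) x
        = tc (m+n-1) p (tc m n (ex f) (ex g)) (ex h) x
          - tc m (n+p-1) (ex f) (tc n p (ex g) (ex h)) x := rfl
    rw [hd]; abel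
  have hA5 : tc (n+m-1) p (tc n m (ex g) (ex f)) (ex h) x
      = tc n (p+m-1) (ex g) (tc m p (ex f) (ex h)) x
        + assoc n m p (ex g) (ex f) (ex h) x := by
    rw [show (p+m-1 : ℕ) = m+p-1 from by omega]
    have hd : assoc n m p (ex g) (ex f) (ex h) x
        = tc (n+m-1) p (tc n m (ex g) (ex f)) (ex h) x
          - tc n (m+p-1) (ex g) (tc m p (ex f) (ex h)) x := rfl
    rw [hd]; abel
  have hA11 : tc (p+m-1) n (tc p m (ex h) (ex f)) (ex g) x
      = tc p (n+m-1) (ex h) (tc m n (ex f) (ex g)) x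
        + assoc p m n (ex h) (ex f) (ex g) x := by
    rw [show (n+m-1 : ℕ) = m+n-1 from by omega]
    have hd : assoc p m n (ex h) (ex f) (ex g) x
        = tc (p+m-1) n (tc p m (ex h) (ex f)) (ex g) x
          - tc p (m+n-1) (ex h) (tc m n (ex f) (ex g)) x := rfl
    rw [hd]; abel
  have hA12 : tc (p+m-1) n (tc m p (ex f) (ex h)) (ex g) x
      = tc m (n+p-1) (ex f) (tc p n (ex h) (ex g)) x
        + assoc m p n (ex f) (ex h) (ex g) x := by
    rw [show (p+m-1 : ℕ) = m+p-1 from by omega, show (n+p-1 : ℕ) = p+n-1 from by omega]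
    have hd : assoc m p n (ex f) (ex h) (ex g) x
        = tc (m+p-1) n (tc m p (ex f) (ex h)) (ex g) x
          - tc m (p+n-1) (ex f) (tc p n (ex h) (ex g)) x := rfl
    rw [hd]; abel
  rw [hA1, hA2, hA6, hA5, hA11, hA12]
  -- sign normalizations
  have hs1 : sgn ((((n+p-1 : ℕ) : ℤ) - 1) * ((m:ℤ) - 1))
      = sgn (((n:ℤ)-1) * ((m:ℤ)-1)) * sgn (((p:ℤ)-1) * ((m:ℤ)-1)) := by
    rw [show (((n+p-1 : ℕ) : ℤ)) = (n:ℤ) + (p:ℤ) - 1 from by omega, ← sgn_add]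
    congr 1; ring
  have hs2 : sgn ((((n+m-1 : ℕ) : ℤ) - 1) * ((p:ℤ) - 1))
      = sgn (((n:ℤ)-1) * ((p:ℤ)-1)) * sgn (((m:ℤ)-1) * ((p:ℤ)-1)) := by
    rw [show (((n+m-1 : ℕ) : ℤ)) = (n:ℤ) + (m:ℤ) - 1 from by omega, ← sgn_add]
    congr 1; ring
  have hs3 : sgn (((n:ℤ) - 1) * (((p+m-1 : ℕ) : ℤ) - 1))
      = sgn (((n:ℤ)-1) * ((p:ℤ)-1)) * sgn (((n:ℤ)-1) * ((m:ℤ)-1)) := by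
    rw [show (((p+m-1 : ℕ) : ℤ)) = (p:ℤ) + (m:ℤ) - 1 from by omega, ← sgn_add]
    congr 1; ring
  rw [hs1, hs2, hs3]
  have hw : sgn (((p:ℤ)-1) * ((m:ℤ)-1)) = sgn (((m:ℤ)-1) * ((p:ℤ)-1)) := by rw [mul_comm]
  rw [hw]
  rcases sgn_eq_one_or (((n:ℤ)-1) * ((m:ℤ)-1)) with hu | hu <;>
    rcases sgn_eq_one_or (((n:ℤ)-1) * ((p:ℤ)-1)) with hv | hv <;>
      rcases sgn_eq_one_or (((m:ℤ)-1) * ((p:ℤ)-1)) with hww | hww <;>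
        rw [hu, hv, hww] <;> module


lemma sgn_add_two_mul (e k : ℤ) : sgn (e + 2 * k) = sgn e := by
  rw [sgn_add, sgn_two_mul, mul_one]

-- degenerate case n = p = 0
lemma main_np0 {m : ℕ} (f : C K L m) (g : C K L 0) (h : C K L 0) (x : ℕ → L) :
    gb (0 + 0 - 1) m (gb 0 0 (ex g) (ex h)) (ex f) x
      = sgn (((m : ℤ) - 1) * (((0:ℕ) : ℤ) - 1)) •
            gb (0 + m - 1) 0 (gb 0 m (ex g) (ex f)) (ex h) x
          + gb 0 (0 + m - 1) (ex g) (gb 0 m (ex h) (ex f)) x := by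
  have hZ : ∀ y, gb 0 0 (ex g) (ex h) y = 0 := gb00_zero _ _
  rw [show (0 + 0 - 1 : ℕ) = 0 from rfl, show (0 + m - 1 : ℕ) = m - 1 from by omega]
  rw [gb_apply 0 m _ _ x, gb_apply (m-1) 0 _ _ x, gb_apply 0 (m-1) _ _ x]
  rw [tc_zero_left m (gb 0 0 (ex g) (ex h)) (ex f) x]
  rw [tc_right_zeroF f 0 _ hZ x]
  rw [tc_gb_left (m-1) 0 0 m (ex g) (ex f) (ex h) x]
  rw [tc_left_zeroF (m-1) 0 (tc 0 m (ex g) (ex f)) (ex h)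
    (fun y => tc_zero_left m (ex g) (ex f) y) x]
  rw [tc_zero_left (m-1) (ex h) (gb 0 m (ex g) (ex f)) x]
  rw [tc_zero_left (m-1) (ex g) (gb 0 m (ex h) (ex f)) x]
  rw [tc_gb_left (m-1) 0 0 m (ex h) (ex f) (ex g) x]
  rw [tc_left_zeroF (m-1) 0 (tc 0 m (ex h) (ex f)) (ex g)
    (fun y => tc_zero_left m (ex h) (ex f) y) x]
  by_cases hm : m = 0
  · subst hm
    rw [show (0 - 1 : ℕ) = 0 from rfl]
    rw [tc_zero_left 0 (tc 0 0 (ex f) (ex g)) (ex h) x,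
        tc_zero_left 0 (tc 0 0 (ex f) (ex h)) (ex g) x]
    simp
  · -- the relation LL(f,g,h) = - LL(f,h,g)
    have hrel : tc (m-1) 0 (tc m 0 (ex f) (ex g)) (ex h) x
        = - tc (m-1) 0 (tc m 0 (ex f) (ex h)) (ex g) x := by
      have hd1 : assoc m 0 0 (ex f) (ex g) (ex h) x
          = tc (m + 0 - 1) 0 (tc m 0 (ex f) (ex g)) (ex h) x
            - tc m (0 + 0 - 1) (ex f) (tc 0 0 (ex g) (ex h)) x := rfl
      have hd2 : assoc m 0 0 (ex f) (ex h) (ex g) x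
          = tc (m + 0 - 1) 0 (tc m 0 (ex f) (ex h)) (ex g) x
            - tc m (0 + 0 - 1) (ex f) (tc 0 0 (ex h) (ex g)) x := rfl
      have hz1 : tc m (0 + 0 - 1) (ex f) (tc 0 0 (ex g) (ex h)) x = 0 :=
        tc_right_zeroF f _ _ (fun y => tc_zero_left 0 (ex g) (ex h) y) x
      have hz2 : tc m (0 + 0 - 1) (ex f) (tc 0 0 (ex h) (ex g)) x = 0 :=
        tc_right_zeroF f _ _ (fun y => tc_zero_left 0 (ex h) (ex g) y) x
      have hsy := assoc_symm f g h x
      rw [hd1, hd2, hz1, hz2, sub_zero, sub_zero] at hsy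
      rw [show ((((0:ℕ):ℤ) - 1) * (((0:ℕ):ℤ) - 1)) = 1 from by norm_num, sgn_one] at hsy
      rw [show (m + 0 - 1 : ℕ) = m - 1 from by omega] at hsy
      rw [hsy]; rw [neg_smul, one_smul]
    rw [hrel]
    -- exponent normalizations (m ≥ 1)
    rw [show ((m-1 : ℕ) : ℤ) = (m : ℤ) - 1 from by omega]
    rw [Nat.cast_zero]
    rw [show (((m:ℤ) - 1) * ((0:ℤ) - 1)) = ((m:ℤ)-1) + 2 * (-((m:ℤ)-1)) from by ring,
      sgn_add_two_mul]
    rw [show (((0:ℤ) - 1) * ((m:ℤ) - 1)) = ((m:ℤ)-1) + 2 * (-((m:ℤ)-1)) from by ring,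
      sgn_add_two_mul]
    rw [show (((0:ℤ) - 1) * (((m:ℤ) - 1) - 1)) = 1 + (((m:ℤ)-1) + 2 * (-((m:ℤ)-1))) from
      by ring, sgn_add, sgn_add_two_mul, sgn_one]
    rcases sgn_eq_one_or ((m:ℤ) - 1) with hu | hu <;> rw [hu] <;> module


-- degenerate case n = m = 0
lemma main_nm0 {p : ℕ} (f : C K L 0) (g : C K L 0) (h : C K L p) (x : ℕ → L) :
    gb (0 + p - 1) 0 (gb 0 p (ex g) (ex h)) (ex f) x
      = sgn ((((0:ℕ) : ℤ) - 1) * ((p : ℤ) - 1)) •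
            gb (0 + 0 - 1) p (gb 0 0 (ex g) (ex f)) (ex h) x
          + gb 0 (p + 0 - 1) (ex g) (gb p 0 (ex h) (ex f)) x := by
  rw [show (0 + p - 1 : ℕ) = p - 1 from by omega, show (0 + 0 - 1 : ℕ) = 0 from rfl,
    show (p + 0 - 1 : ℕ) = p - 1 from rfl]
  rw [gb_apply (p-1) 0 _ _ x, gb_apply 0 p _ _ x, gb_apply 0 (p-1) _ _ x]
  rw [tc_zero_left (p-1) (ex f) (gb 0 p (ex g) (ex h)) x]
  rw [tc_gb_left (p-1) 0 0 p (ex g) (ex h) (ex f) x]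
  rw [tc_left_zeroF (p-1) 0 (tc 0 p (ex g) (ex h)) (ex f)
    (fun y => tc_zero_left p (ex g) (ex h) y) x]
  rw [tc_zero_left p (gb 0 0 (ex g) (ex f)) (ex h) x]
  rw [tc_right_zeroF h 0 _ (gb00_zero (ex g) (ex f)) x]
  rw [tc_zero_left (p-1) (ex g) (gb p 0 (ex h) (ex f)) x]
  rw [tc_gb_left (p-1) 0 p 0 (ex h) (ex f) (ex g) x]
  rw [tc_left_zeroF (p-1) 0 (tc 0 p (ex f) (ex h)) (ex g)
    (fun y => tc_zero_left p (ex f) (ex h) y) x]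
  by_cases hp : p = 0
  · subst hp
    rw [show (0 - 1 : ℕ) = 0 from rfl]
    rw [tc_zero_left 0 (tc 0 0 (ex h) (ex g)) (ex f) x,
        tc_zero_left 0 (tc 0 0 (ex h) (ex f)) (ex g) x]
    simp
  · have hrel : tc (p-1) 0 (tc p 0 (ex h) (ex g)) (ex f) x
        = - tc (p-1) 0 (tc p 0 (ex h) (ex f)) (ex g) x := by
      have hd1 : assoc p 0 0 (ex h) (ex g) (ex f) x
          = tc (p + 0 - 1) 0 (tc p 0 (ex h) (ex g)) (ex f) x
            - tc p (0 + 0 - 1) (ex h) (tc 0 0 (ex g) (ex f)) x := rfl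
      have hd2 : assoc p 0 0 (ex h) (ex f) (ex g) x
          = tc (p + 0 - 1) 0 (tc p 0 (ex h) (ex f)) (ex g) x
            - tc p (0 + 0 - 1) (ex h) (tc 0 0 (ex f) (ex g)) x := rfl
      have hz1 : tc p (0 + 0 - 1) (ex h) (tc 0 0 (ex g) (ex f)) x = 0 :=
        tc_right_zeroF h _ _ (fun y => tc_zero_left 0 (ex g) (ex f) y) x
      have hz2 : tc p (0 + 0 - 1) (ex h) (tc 0 0 (ex f) (ex g)) x = 0 :=
        tc_right_zeroF h _ _ (fun y => tc_zero_left 0 (ex f) (ex g) y) x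
      have hsy := assoc_symm h g f x
      rw [hd1, hd2, hz1, hz2, sub_zero, sub_zero] at hsy
      rw [show ((((0:ℕ):ℤ) - 1) * (((0:ℕ):ℤ) - 1)) = 1 from by norm_num, sgn_one] at hsy
      rw [show (p + 0 - 1 : ℕ) = p - 1 from rfl] at hsy
      rw [hsy, neg_smul, one_smul]
    rw [hrel]
    rw [show ((p-1 : ℕ) : ℤ) = (p : ℤ) - 1 from by omega]
    rw [Nat.cast_zero]
    rw [show (((0:ℤ) - 1) * ((p:ℤ) - 1)) = ((p:ℤ)-1) + 2 * (-((p:ℤ)-1)) from by ring,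
      sgn_add_two_mul]
    rw [show ((((p:ℤ) - 1) - 1) * ((0:ℤ) - 1)) = 1 + (((p:ℤ)-1) + 2 * (-((p:ℤ)-1))) from
      by ring, sgn_add, sgn_add_two_mul, sgn_one]
    rw [show (((0:ℤ) - 1) * (((p:ℤ) - 1) - 1)) = 1 + (((p:ℤ)-1) + 2 * (-((p:ℤ)-1))) from
      by ring, sgn_add, sgn_add_two_mul, sgn_one]
    rw [show (((p:ℤ) - 1) * ((0:ℤ) - 1)) = ((p:ℤ)-1) + 2 * (-((p:ℤ)-1)) from by ring,
      sgn_add_two_mul]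
    rcases sgn_eq_one_or ((p:ℤ) - 1) with hu | hu <;> rw [hu] <;> module

-- degenerate case p = m = 0
lemma main_pm0 {n : ℕ} (f : C K L 0) (g : C K L n) (h : C K L 0) (x : ℕ → L) :
    gb (n + 0 - 1) 0 (gb n 0 (ex g) (ex h)) (ex f) x
      = sgn ((((0:ℕ) : ℤ) - 1) * (((0:ℕ) : ℤ) - 1)) •
            gb (n + 0 - 1) 0 (gb n 0 (ex g) (ex f)) (ex h) x
          + gb n (0 + 0 - 1) (ex g) (gb 0 0 (ex h) (ex f)) x := by
  rw [show (n + 0 - 1 : ℕ) = n - 1 from rfl, show (0 + 0 - 1 : ℕ) = 0 from rfl]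
  rw [gb_apply (n-1) 0 _ _ x, gb_apply (n-1) 0 _ _ x, gb_apply n 0 _ _ x]
  rw [tc_zero_left (n-1) (ex f) (gb n 0 (ex g) (ex h)) x]
  rw [tc_zero_left (n-1) (ex h) (gb n 0 (ex g) (ex f)) x]
  rw [tc_right_zeroF g 0 _ (gb00_zero (ex h) (ex f)) x]
  rw [tc_zero_left n (gb 0 0 (ex h) (ex f)) (ex g) x]
  rw [tc_gb_left (n-1) 0 n 0 (ex g) (ex h) (ex f) x]
  rw [tc_gb_left (n-1) 0 n 0 (ex g) (ex f) (ex h) x]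
  rw [tc_left_zeroF (n-1) 0 (tc 0 n (ex h) (ex g)) (ex f)
    (fun y => tc_zero_left n (ex h) (ex g) y) x]
  rw [tc_left_zeroF (n-1) 0 (tc 0 n (ex f) (ex g)) (ex h)
    (fun y => tc_zero_left n (ex f) (ex g) y) x]
  have hrel : tc (n-1) 0 (tc n 0 (ex g) (ex h)) (ex f) x
      = sgn ((((0:ℕ):ℤ) - 1) * (((0:ℕ):ℤ) - 1)) •
          tc (n-1) 0 (tc n 0 (ex g) (ex f)) (ex h) x := by
    have hd1 : assoc n 0 0 (ex g) (ex h) (ex f) x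
        = tc (n + 0 - 1) 0 (tc n 0 (ex g) (ex h)) (ex f) x
          - tc n (0 + 0 - 1) (ex g) (tc 0 0 (ex h) (ex f)) x := rfl
    have hd2 : assoc n 0 0 (ex g) (ex f) (ex h) x
        = tc (n + 0 - 1) 0 (tc n 0 (ex g) (ex f)) (ex h) x
          - tc n (0 + 0 - 1) (ex g) (tc 0 0 (ex f) (ex h)) x := rfl
    have hz1 : tc n (0 + 0 - 1) (ex g) (tc 0 0 (ex h) (ex f)) x = 0 :=
      tc_right_zeroF g _ _ (fun y => tc_zero_left 0 (ex h) (ex f) y) x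
    have hz2 : tc n (0 + 0 - 1) (ex g) (tc 0 0 (ex f) (ex h)) x = 0 :=
      tc_right_zeroF g _ _ (fun y => tc_zero_left 0 (ex f) (ex h) y) x
    have hsy := assoc_symm g h f x
    rw [hd1, hd2, hz1, hz2, sub_zero, sub_zero] at hsy
    rw [show (n + 0 - 1 : ℕ) = n - 1 from rfl] at hsy
    exact hsy
  rw [hrel]
  module


/-- right translations `R_f g := [g, f]` are graded derivations of
the Gerstenhaber bracket: `R_f [g,h] = (-1)^{|f||h|} [R_f g, h] + [g, R_f h]`. -/
theorem right_translations_are_bracket_derivations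
    {m n p : ℕ} (f : C K L m) (g : C K L n) (h : C K L p) :
    gb (n + p - 1) m (gb n p (ex g) (ex h)) (ex f)
      = sgn (((m : ℤ) - 1) * ((p : ℤ) - 1)) •
            gb (n + m - 1) p (gb n m (ex g) (ex f)) (ex h)
          + gb n (p + m - 1) (ex g) (gb p m (ex h) (ex f)) := by
  funext x
  simp only [Pi.add_apply, Pi.smul_apply]
  by_cases h1 : n = 0 ∧ p = 0
  · obtain ⟨hn, hp⟩ := h1; subst hn; subst hp; exact main_np0 f g h x
  by_cases h2 : n = 0 ∧ m = 0
  · obtain ⟨hn, hm⟩ := h2; subst hn; subst hm; exact main_nm0 f g h x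
  by_cases h3 : p = 0 ∧ m = 0
  · obtain ⟨hp, hm⟩ := h3; subst hp; subst hm; exact main_pm0 f g h x
  · have hnp : 1 ≤ n + p := by by_contra hc; exact h1 ⟨by omega, by omega⟩
    have hnm : 1 ≤ n + m := by by_contra hc; exact h2 ⟨by omega, by omega⟩
    have hpm : 1 ≤ p + m := by by_contra hc; exact h3 ⟨by omega, by omega⟩
    exact main_generic f g h hnp hnm hpm x

end OperadPrelude
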